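/- Let F = (1, S, N, f) be a one-dimensional CA with S ⊂ ℤ finite, N = {-l,...,r}, n = l+r+1, and let a ∈ S be any fixed state. Then F is number-conserving if and only if for all (x_1,...,x_n) ∈ S^n: f(x_1,...,x_n) = x_1 + ∑_{k=1}^{n-1} [ f(a,...,a (n-k times), x_2,...,x_{k+1}) − f(a,...,a (n-k times), x_1,...,x_k) ]. -/

import Mathlib

open Finset

/-- Global map of a 1D CA: the local rule `f` is applied to the window of `c` around each cell. -/
def glob (f : (ℤ → ℤ) → ℤ) (c : ℤ → ℤ) : ℤ → ℤ := fun i => f (fun j => c (i + j))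

/-- A configuration over state set `S`. -/
def Config (S : Finset ℤ) (c : ℤ → ℤ) : Prop := ∀ i, c i ∈ S

/-- `p` is a (spatial) period of `c`. -/
def Per (p : ℕ) (c : ℤ → ℤ) : Prop := ∀ i : ℤ, c (i + (p : ℤ)) = c i

/-- The local rule only depends on the neighborhood `{-l,...,r}`. -/
def LocalRule (l r : ℕ) (f : (ℤ → ℤ) → ℤ) : Prop :=
  ∀ c d : ℤ → ℤ, (∀ j : ℤ, -(l : ℤ) ≤ j → j ≤ (r : ℤ) → c j = d j) → f c = f d

/-- The rule maps `S`-configurations to states in `S`. -/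
def Closed (S : Finset ℤ) (f : (ℤ → ℤ) → ℤ) : Prop :=
  ∀ c, Config S c → f c ∈ S

/-- Number conservation: the sum over one period of any spatially periodic
configuration is preserved by the global map. -/
def NC (S : Finset ℤ) (f : (ℤ → ℤ) → ℤ) : Prop :=
  ∀ c : ℤ → ℤ, Config S c → ∀ p : ℕ, 0 < p → Per p c →
    ∑ k ∈ Finset.range p, glob f c (k : ℤ) = ∑ k ∈ Finset.range p, c (k : ℤ)

/-- The window consisting of n - k copies of a followed by
x_{s+1}, ..., x_{s+k} (positions -l..r, 1-based tuple indexing). -/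
def pat (l r : ℕ) (a : ℤ) (w : ℤ → ℤ) (k : ℕ) (s : ℤ) : ℤ → ℤ :=
  fun j => if j ≤ (r : ℤ) - (k : ℤ) then a else w (j - (r : ℤ) + (k : ℤ) + s - (l : ℤ) - 1)

/-- Boccara–Fuks necessary and sufficient condition for number conservation,
for an arbitrary finite state set S ⊂ ℤ and arbitrary fixed state a ∈ S. -/
lemma per_sum_succ (h : ℤ → ℤ) (p : ℕ) (hper : Per p h) :
    ∑ k ∈ range p, h ((k : ℤ) + 1) = ∑ k ∈ range p, h (k : ℤ) := by
  have e1 := Finset.sum_range_succ' (fun m : ℕ => h (m : ℤ)) p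
  have e2 := Finset.sum_range_succ (fun m : ℕ => h (m : ℤ)) p
  have e3 : h ((p : ℕ) : ℤ) = h ((0 : ℕ) : ℤ) := by have := hper 0; simpa using this
  push_cast at e1 e2 e3 ⊢
  omega

lemma per_sum_shift (h : ℤ → ℤ) (p : ℕ) (hper : Per p h) (t : ℤ) :
    ∑ k ∈ range p, h ((k : ℤ) + t) = ∑ k ∈ range p, h (k : ℤ) := by
  induction t using Int.induction_on with
  | zero => simp
  | succ t ih =>
      have key := per_sum_succ (fun x => h (x + t)) p (fun i => by
        simp only []
        rw [show i + (p : ℤ) + t = (i + t) + p by ring, hper])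
      have A : ∑ k ∈ range p, h ((k : ℤ) + ((t : ℤ) + 1))
          = ∑ k ∈ range p, h ((k : ℤ) + 1 + t) :=
        Finset.sum_congr rfl fun k _ => by ring_nf
      rw [A, key, ih]
  | pred t ih =>
      have key := per_sum_succ (fun x => h (x + (-(t : ℤ) - 1))) p (fun i => by
        simp only []
        rw [show i + (p : ℤ) + (-(t : ℤ) - 1) = (i + (-(t : ℤ) - 1)) + p by ring, hper])
      have B : ∑ k ∈ range p, h ((k : ℤ) + 1 + (-(t : ℤ) - 1))
          = ∑ k ∈ range p, h ((k : ℤ) + -(t : ℤ)) :=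
        Finset.sum_congr rfl fun k _ => by ring_nf
      rw [← key, B, ih]

lemma per_telescope (g : ℤ → ℤ) (p : ℕ) (hper : Per p g) :
    ∑ k ∈ range p, (g ((k : ℤ) + 1) - g (k : ℤ)) = 0 := by
  have e1 := Finset.sum_range_sub (fun m : ℕ => g (m : ℤ)) p
  have e3 : g ((p : ℕ) : ℤ) = g ((0 : ℕ) : ℤ) := by have := hper 0; simpa using this
  have e4 : ∑ k ∈ range p, (g ((k : ℤ) + 1) - g (k : ℤ))
      = ∑ k ∈ range p, ((fun m : ℕ => g (m : ℤ)) (k + 1) - (fun m : ℕ => g (m : ℤ)) k) :=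
    Finset.sum_congr rfl fun k _ => by push_cast; ring_nf
  rw [e4, e1, e3]
  simp

def tailpat (l r : ℕ) (a : ℤ) (u : ℤ → ℤ) (m : ℕ) : ℤ → ℤ :=
  fun j => if j ≤ (r : ℤ) - (m : ℤ) then u (j + m) else a

lemma f_const (S : Finset ℤ) (f : (ℤ → ℤ) → ℤ) (a : ℤ) (ha : a ∈ S)
    (hNC : NC S f) : f (fun _ => a) = a := by
  have := hNC (fun _ => a) (fun _ => ha) 1 one_pos (fun i => rfl)
  simpa [glob] using this

lemma star (S : Finset ℤ) (l r : ℕ) (f : (ℤ → ℤ) → ℤ) (a : ℤ) (ha : a ∈ S)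
    (hl : LocalRule l r f) (hNC : NC S f) (u : ℤ → ℤ) (hu : Config S u) :
    (∑ t ∈ range (l + r + 1), f (pat l r a u (t + 1) 0))
      + (∑ t ∈ range (l + r), f (tailpat l r a u (t + 1)))
    = (∑ j ∈ range (l + r + 1), u ((j : ℤ) - l)) + ((l : ℤ) + r) * a := by
  classical
  set n : ℕ := l + r + 1 with hn
  set p : ℕ := 2 * n with hp
  set c : ℤ → ℤ := fun i => if i % (p : ℤ) < (n : ℤ) then u (i % (p : ℤ) - l) else a with hc
  have hnl : (n : ℤ) = (l : ℤ) + r + 1 := by rw [hn]; push_cast; ring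
  have hpl : (p : ℤ) = 2 * ((l : ℤ) + r + 1) := by rw [hp, hn]; push_cast; ring
  have hemod : ∀ m : ℤ, m % (p : ℤ) = (m + p) % (p : ℤ) := by
    intro m
    rw [show m + (p : ℤ) = m + (p : ℤ) * 1 by ring, Int.add_mul_emod_self_left]
  have hper : Per p c := by
    intro i
    simp only [hc]
    rw [← hemod]
  have hcfg : Config S c := by
    intro i; simp only [hc]; split
    · exact hu _
    · exact ha
  have hc1 : ∀ m : ℤ, 0 ≤ m → m < (n : ℤ) → c m = u (m - l) := by
    intro m h1 h2
    simp only [hc]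
    rw [Int.emod_eq_of_lt h1 (by omega), if_pos h2]
  have hc2 : ∀ m : ℤ, (n : ℤ) ≤ m → m < (p : ℤ) → c m = a := by
    intro m h1 h2
    simp only [hc]
    rw [Int.emod_eq_of_lt (by omega) h2, if_neg (by omega)]
  have hc3 : ∀ m : ℤ, -(n : ℤ) < m → m < 0 → c m = a := by
    intro m h1 h2
    simp only [hc]
    rw [hemod, Int.emod_eq_of_lt (by omega) (by omega), if_neg (by omega)]
  -- window evaluations
  have E1 : ∀ t : ℕ, t < n → glob f c ((t : ℤ) - r) = f (pat l r a u (t + 1) 0) := by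
    intro t ht
    have ht' : (t : ℤ) < n := by exact_mod_cast ht
    show f _ = f _
    apply hl
    intro j hj1 hj2
    simp only [pat]
    by_cases hcase : j ≤ (r : ℤ) - ((t + 1 : ℕ) : ℤ)
    · push_cast at hcase
      rw [if_pos (by push_cast; omega)]
      exact hc3 _ (by omega) (by omega)
    · push_cast at hcase
      rw [if_neg (by push_cast; omega)]
      rw [hc1 _ (by omega) (by omega)]
      congr 1
      push_cast
      ring
  have E2 : ∀ t : ℕ, n ≤ t → t < 2 * n - 1 →
      glob f c ((t : ℤ) - r) = f (tailpat l r a u (t - n + 1)) := by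
    intro t ht1 ht2
    have ht1' : (n : ℤ) ≤ t := by exact_mod_cast ht1
    have ht2' : (t : ℤ) < 2 * n - 1 := by
      have : (t : ℤ) < ((2 * n - 1 : ℕ) : ℤ) := by exact_mod_cast ht2
      omega
    have hcast : ((t - n + 1 : ℕ) : ℤ) = (t : ℤ) - n + 1 := by omega
    show f _ = f _
    apply hl
    intro j hj1 hj2
    simp only [tailpat, hcast]
    by_cases hcase : j ≤ (r : ℤ) - ((t : ℤ) - n + 1)
    · rw [if_pos hcase]
      rw [hc1 _ (by omega) (by omega)]
      congr 1
      omega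
    · rw [if_neg hcase]
      exact hc2 _ (by omega) (by omega)
  have E3 : glob f c (((2 * n - 1 : ℕ) : ℤ) - r) = a := by
    have hcast : ((2 * n - 1 : ℕ) : ℤ) = 2 * (n : ℤ) - 1 := by omega
    rw [hcast]
    have : (fun j => c (2 * (n : ℤ) - 1 - r + j)) = (fun _ : ℤ => a) →
        f (fun j => c (2 * (n : ℤ) - 1 - r + j)) = a := by
      intro h; rw [show f (fun j => c (2 * (n : ℤ) - 1 - r + j)) = f (fun _ => a) from by rw [h]]
      exact f_const S f a ha hNC
    show f _ = a
    rw [hl (fun j => c (2 * (n : ℤ) - 1 - r + j)) (fun _ => a)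
      (fun j hj1 hj2 => hc2 _ (by omega) (by omega))]
    exact f_const S f a ha hNC
  -- glob is periodic
  have hperF : Per p (glob f c) := by
    intro i
    simp only [glob]
    congr 1
    funext j
    rw [show i + (p : ℤ) + j = (i + j) + (p : ℤ) by ring]
    exact hper _
  have key := hNC c hcfg p (by omega) hper
  have hLHS := per_sum_shift (glob f c) p hperF (-(r : ℤ))
  -- rewrite shifted sum
  have hA : ∑ t ∈ range p, glob f c ((t : ℤ) + -(r : ℤ))
      = ∑ t ∈ range p, glob f c ((t : ℤ) - r) :=
    Finset.sum_congr rfl fun t _ => by ring_nf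
  -- split the sum over range p = range (n + n)
  have hsplitF : ∑ t ∈ range p, glob f c ((t : ℤ) - r)
      = ∑ t ∈ range n, glob f c ((t : ℤ) - r)
        + ∑ t ∈ range n, glob f c (((n + t : ℕ) : ℤ) - r) := by
    rw [hp, two_mul, Finset.sum_range_add]
  have hF1 : ∑ t ∈ range n, glob f c ((t : ℤ) - r)
      = ∑ t ∈ range n, f (pat l r a u (t + 1) 0) :=
    Finset.sum_congr rfl fun t htt => E1 t (mem_range.mp htt)
  have hF2 : ∑ t ∈ range n, glob f c (((n + t : ℕ) : ℤ) - r)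
      = ∑ t ∈ range (l + r), f (tailpat l r a u (t + 1)) + a := by
    have hnn : n = (l + r) + 1 := hn
    rw [show (range n) = range ((l + r) + 1) from by rw [hnn]]
    rw [Finset.sum_range_succ]
    congr 1
    · refine Finset.sum_congr rfl fun t htt => ?_
      have htlt : t < l + r := mem_range.mp htt
      have harg : n + t - n + 1 = t + 1 := by omega
      have := E2 (n + t) (by omega) (by omega)
      rw [harg] at this
      exact this
    · have : n + (l + r) = 2 * n - 1 := by omega
      rw [this]
      exact E3
  -- RHS sum
  have hRHS : ∑ t ∈ range p, c (t : ℤ)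
      = (∑ j ∈ range n, u ((j : ℤ) - l)) + (n : ℤ) * a := by
    have hsplit : ∑ t ∈ range p, c (t : ℤ)
        = ∑ t ∈ range n, c (t : ℤ) + ∑ t ∈ range n, c ((n + t : ℕ) : ℤ) := by
      rw [hp, two_mul, Finset.sum_range_add]
    rw [hsplit]
    congr 1
    · refine Finset.sum_congr rfl fun t htt => ?_
      have := mem_range.mp htt
      exact hc1 _ (by omega) (by exact_mod_cast this)
    · have : ∀ t ∈ range n, c ((n + t : ℕ) : ℤ) = a := by
        intro t htt
        have := mem_range.mp htt
        exact hc2 _ (by omega) (by push_cast; omega)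
      rw [Finset.sum_congr rfl this]
      simp [mul_comm]
  rw [hA, hsplitF, hF1, hF2, key, hRHS] at hLHS
  have : ((l : ℤ) + r) * a = (n : ℤ) * a - a := by rw [hnl]; ring
  rw [this]
  linarith [hLHS]

lemma nc_imp_cond (S : Finset ℤ) (l r : ℕ) (f : (ℤ → ℤ) → ℤ) (a : ℤ) (ha : a ∈ S)
    (hl : LocalRule l r f) (hNC : NC S f) (w : ℤ → ℤ) (hw : Config S w) :
    f w = w (-(l : ℤ)) +
      ∑ k ∈ Finset.Icc 1 (l + r), (f (pat l r a w k 1) - f (pat l r a w k 0)) := by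
  classical
  set v : ℤ → ℤ := fun j => if j < (r : ℤ) then w (j + 1) else a with hv
  have hvc : Config S v := fun j => by
    simp only [hv]; split
    · exact hw _
    · exact ha
  have Sw := star S l r f a ha hl hNC w hw
  have Sv := star S l r f a ha hl hNC v hvc
  have I1 : ∀ t : ℕ, t < l + r → f (pat l r a v (t + 1) 0) = f (pat l r a w (t + 1) 1) := by
    intro t ht
    apply hl
    intro j hj1 hj2
    simp only [pat, hv]
    by_cases hcase : j ≤ (r : ℤ) - ((t + 1 : ℕ) : ℤ)
    · rw [if_pos hcase, if_pos hcase]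
    · rw [if_neg hcase, if_neg hcase]
      push_cast at hcase ⊢
      rw [if_pos (by omega)]
      congr 1
      ring
  have I2 : f (pat l r a v (l + r + 1) 0) = f (tailpat l r a w 1) := by
    apply hl
    intro j hj1 hj2
    simp only [pat, tailpat, hv]
    push_cast
    rw [if_neg (by omega)]
    by_cases hcase : j < (r : ℤ)
    · rw [if_pos (show j - (r : ℤ) + ((l : ℤ) + (r : ℤ) + 1) + 0 - (l : ℤ) - 1 < (r : ℤ) by omega),
        if_pos (show j ≤ (r : ℤ) - 1 by omega)]
      congr 1
      ring
    · rw [if_neg (show ¬(j - (r : ℤ) + ((l : ℤ) + (r : ℤ) + 1) + 0 - (l : ℤ) - 1 < (r : ℤ)) by omega),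
        if_neg (show ¬(j ≤ (r : ℤ) - 1) by omega)]
  have I3 : ∀ m : ℕ, tailpat l r a v m = tailpat l r a w (m + 1) := by
    intro m
    funext j
    simp only [tailpat, hv]
    push_cast
    by_cases h1 : j ≤ (r : ℤ) - m
    · rw [if_pos h1]
      by_cases h2 : j + (m : ℤ) < r
      · rw [if_pos h2, if_pos (by omega)]
        congr 1
        ring
      · rw [if_neg h2, if_neg (by omega)]
    · rw [if_neg h1, if_neg (by omega)]
  have I5 : f (tailpat l r a w (l + r + 1)) = a := by
    rw [hl (tailpat l r a w (l + r + 1)) (fun _ => a) (fun j hj1 hj2 => by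
      simp only [tailpat]
      rw [if_neg (by push_cast; omega)])]
    exact f_const S f a ha hNC
  have I6 : f (pat l r a w (l + r + 1) 0) = f w := by
    apply hl
    intro j hj1 hj2
    simp only [pat]
    rw [if_neg (by push_cast; omega)]
    congr 1
    push_cast
    ring
  -- abbreviations
  set A : ℤ := ∑ t ∈ range (l + r), f (pat l r a w (t + 1) 0) with hA
  set B : ℤ := ∑ t ∈ range (l + r), f (pat l r a w (t + 1) 1) with hB
  set C : ℤ := ∑ t ∈ range (l + r), f (tailpat l r a w (t + 1)) with hC
  set D : ℤ := ∑ j ∈ range (l + r), w ((j : ℤ) - l + 1) with hD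
  set K : ℤ := ((l : ℤ) + r) * a with hK
  -- rewrite Sw
  have ew1 : ∑ t ∈ range (l + r + 1), f (pat l r a w (t + 1) 0) = A + f w := by
    rw [Finset.sum_range_succ, I6, hA]
  have ew2 : ∑ j ∈ range (l + r + 1), w ((j : ℤ) - l) = w (-(l : ℤ)) + D := by
    have := Finset.sum_range_succ' (fun j : ℕ => w ((j : ℤ) - l)) (l + r)
    rw [this]
    have e0 : w (((0 : ℕ) : ℤ) - l) = w (-(l : ℤ)) := by norm_num
    rw [e0]
    have : ∑ j ∈ range (l + r), w (((j + 1 : ℕ) : ℤ) - l) = D := by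
      rw [hD]
      refine Finset.sum_congr rfl fun j _ => ?_
      congr 1
      push_cast
      ring
    rw [this]
    ring
  rw [ew1, ew2] at Sw
  -- rewrite Sv
  have ev1 : ∑ t ∈ range (l + r + 1), f (pat l r a v (t + 1) 0) = B + f (tailpat l r a w 1) := by
    rw [Finset.sum_range_succ, I2, hB]
    congr 1
    exact Finset.sum_congr rfl fun t ht => I1 t (mem_range.mp ht)
  have ev2 : ∑ t ∈ range (l + r), f (tailpat l r a v (t + 1))
      = C + a - f (tailpat l r a w 1) := by
    have step : ∑ t ∈ range (l + r), f (tailpat l r a v (t + 1))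
        = ∑ t ∈ range (l + r), f (tailpat l r a w (t + 2)) :=
      Finset.sum_congr rfl fun t _ => by rw [I3]
    have T1 : ∑ t ∈ range (l + r + 1), f (tailpat l r a w (t + 1))
        = C + f (tailpat l r a w (l + r + 1)) := by
      rw [Finset.sum_range_succ, hC]
    have T2 : ∑ t ∈ range (l + r + 1), f (tailpat l r a w (t + 1))
        = (∑ t ∈ range (l + r), f (tailpat l r a w (t + 2))) + f (tailpat l r a w 1) := by
      exact Finset.sum_range_succ' (fun t : ℕ => f (tailpat l r a w (t + 1))) (l + r)
    rw [step]
    rw [I5] at T1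
    omega
  have ev3 : ∑ j ∈ range (l + r + 1), v ((j : ℤ) - l) = D + a := by
    rw [Finset.sum_range_succ]
    have e1 : v (((l + r : ℕ) : ℤ) - l) = a := by
      simp only [hv]
      rw [if_neg (by push_cast; omega)]
    rw [e1, hD]
    congr 1
    refine Finset.sum_congr rfl fun j hj => ?_
    have := mem_range.mp hj
    simp only [hv]
    rw [if_pos (by push_cast at this ⊢; omega)]
  rw [ev1, ev2, ev3] at Sv
  -- final sum conversion
  have hIcc : ∑ k ∈ Finset.Icc 1 (l + r), (f (pat l r a w k 1) - f (pat l r a w k 0))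
      = B - A := by
    have e1 : Finset.Icc 1 (l + r) = Finset.Ico 1 (l + r + 1) := by
      rw [Finset.Ico_add_one_right_eq_Icc]
    rw [e1, Finset.sum_Ico_eq_sum_range]
    have e2 : l + r + 1 - 1 = l + r := by omega
    rw [e2]
    have e3 : ∀ t : ℕ, 1 + t = t + 1 := fun t => by omega
    rw [hA, hB, ← Finset.sum_sub_distrib]
    exact Finset.sum_congr rfl fun t _ => by rw [e3]
  rw [hIcc]
  linarith [Sw, Sv]

lemma cond_imp_nc (S : Finset ℤ) (l r : ℕ) (f : (ℤ → ℤ) → ℤ) (a : ℤ)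
    (hcond : ∀ w : ℤ → ℤ, Config S w →
        f w = w (-(l : ℤ)) +
          ∑ k ∈ Finset.Icc 1 (l + r),
            (f (pat l r a w k 1) - f (pat l r a w k 0))) :
    NC S f := by
  intro c hc p hp hper
  -- g k i := f (pat l r a (window of c at i) k 0)
  set g : ℕ → ℤ → ℤ := fun k i => f (pat l r a (fun j => c (i + j)) k 0) with hg
  have hshift : ∀ (k : ℕ) (i : ℤ),
      f (pat l r a (fun j => c (i + j)) k 1) = g k (i + 1) := by
    intro k i
    simp only [hg]
    congr 1
    funext j
    simp only [pat]
    split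
    · rfl
    · congr 1; ring
  have hglob : ∀ i : ℤ, glob f c i = c (i - l) + ∑ k ∈ Finset.Icc 1 (l + r),
      (g k (i + 1) - g k i) := by
    intro i
    have hw : Config S (fun j => c (i + j)) := fun j => hc (i + j)
    have heq := hcond (fun j => c (i + j)) hw
    have h1 : (fun j => c (i + j)) (-(l : ℤ)) = c (i - l) := by
      show c (i + -(l : ℤ)) = c (i - l); congr 1; try ring
    have h2 : ∑ k ∈ Finset.Icc 1 (l + r),
        (f (pat l r a (fun j => c (i + j)) k 1) - f (pat l r a (fun j => c (i + j)) k 0))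
        = ∑ k ∈ Finset.Icc 1 (l + r), (g k (i + 1) - g k i) :=
      Finset.sum_congr rfl fun k _ => by rw [hshift]
    simp only [glob]
    rw [heq, show c (i + -(l : ℤ)) = c (i - l) from h1, h2]
  have hgper : ∀ k : ℕ, Per p (g k) := by
    intro k i
    simp only [hg]
    congr 1
    funext j
    simp only [pat]
    split
    · rfl
    · rw [show i + (p : ℤ) + (j - (r : ℤ) + (k : ℤ) + 0 - (l : ℤ) - 1)
          = (i + (j - (r : ℤ) + (k : ℤ) + 0 - (l : ℤ) - 1)) + (p : ℤ) by ring]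
      exact hper _
  calc ∑ k ∈ range p, glob f c (k : ℤ)
      = ∑ i ∈ range p, (c ((i : ℤ) - l) + ∑ k ∈ Finset.Icc 1 (l + r),
          (g k ((i : ℤ) + 1) - g k (i : ℤ))) :=
        Finset.sum_congr rfl fun i _ => hglob i
    _ = ∑ i ∈ range p, c ((i : ℤ) - l)
        + ∑ i ∈ range p, ∑ k ∈ Finset.Icc 1 (l + r), (g k ((i : ℤ) + 1) - g k (i : ℤ)) := by
        rw [Finset.sum_add_distrib]
    _ = ∑ i ∈ range p, c (i : ℤ) + ∑ k ∈ Finset.Icc 1 (l + r), (0 : ℤ) := by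
        congr 1
        · have := per_sum_shift c p hper (-(l : ℤ))
          calc ∑ i ∈ range p, c ((i : ℤ) - l)
              = ∑ i ∈ range p, c ((i : ℤ) + -(l : ℤ)) :=
                Finset.sum_congr rfl fun i _ => by ring_nf
            _ = _ := this
        · rw [Finset.sum_comm]
          exact Finset.sum_congr rfl fun k _ => per_telescope (g k) p (hgper k)
    _ = ∑ i ∈ range p, c (i : ℤ) := by simp

theorem numberConserving_iff_localCondition
    (S : Finset ℤ) (l r : ℕ) (f : (ℤ → ℤ) → ℤ) (a : ℤ) (ha : a ∈ S)
    (hl : LocalRule l r f) (hC : Closed S f) :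
    NC S f ↔
      ∀ w : ℤ → ℤ, Config S w →
        f w = w (-(l : ℤ)) +
          ∑ k ∈ Finset.Icc 1 (l + r),
            (f (pat l r a w k 1) - f (pat l r a w k 0)) := by
  constructor
  · intro hNC w hw
    exact nc_imp_cond S l r f a ha hl hNC w hw
  · intro hcond
    exact cond_imp_nc S l r f a hcond
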